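/- The q-multinomial coefficient satisfies the symmetric recursion: [L choose i,j]_q = [L-1 choose i,j]_q + q^{L-i}[L-1 choose i-1,j]_q + q^{L-j}[L-1 choose i,j-1]_q + q^{L-i-j}(1-q^{L-1})[L-2 choose i-1,j-1]_q, for all integers L, i, j with i, j ≥ 0. -/

import Mathlib

open Finset

noncomputable section

abbrev K : Type := RatFunc ℚ

def q : K := RatFunc.X

/-- Extended q-Pochhammer symbol `(a;q)_n` for integer `n`. -/
def poch (a : K) (n : ℤ) : K :=
  if 0 ≤ n then ∏ j ∈ Finset.range n.toNat, (1 - a * q ^ j)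
  else (∏ j ∈ Finset.range (-n).toNat, (1 - a * q ^ (-(j + 1 : ℤ))))⁻¹

/-- Extended Gaussian binomial coefficient `[n choose m]_q`. -/
def qbinom (n m : ℤ) : K :=
  if 0 ≤ m then poch (q ^ (n - m + 1)) m / poch q m else 0

/-- Triangular number `T_n = n(n+1)/2`. -/
def T (n : ℤ) : ℤ := n * (n + 1) / 2

/-- The q-multinomial coefficient `[L choose a,b]_q`. -/
def qmul2 (L a b : ℤ) : K := qbinom L a * qbinom (L - a) b

lemma q_ne_zero : (q : K) ≠ 0 := RatFunc.X_ne_zero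

lemma q_pow_ne_one (n : ℕ) (hn : n ≠ 0) : (q : K) ^ n ≠ 1 := by
  intro h
  have h2 : (Polynomial.X : Polynomial ℚ) ^ n = 1 := by
    apply RatFunc.algebraMap_injective ℚ
    rw [map_pow, map_one, RatFunc.algebraMap_X]
    exact h
  have := congrArg Polynomial.natDegree h2
  simp [Polynomial.natDegree_X_pow] at this
  exact hn this

def pochN (a : K) (n : ℕ) : K := ∏ j ∈ Finset.range n, (1 - a * q ^ j)

lemma pochN_succ (a : K) (n : ℕ) :
    pochN a (n + 1) = pochN a n * (1 - a * q ^ n) := Finset.prod_range_succ _ _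

lemma pochN_succ' (a : K) (n : ℕ) :
    pochN a (n + 1) = (1 - a) * pochN (a * q) n := by
  unfold pochN
  rw [Finset.prod_range_succ']
  simp only [pow_zero, mul_one]
  rw [mul_comm]
  congr 1
  apply Finset.prod_congr rfl
  intro j _
  rw [pow_succ]
  ring

lemma pochN_q_ne_zero (n : ℕ) : pochN q n ≠ 0 := by
  unfold pochN
  apply Finset.prod_ne_zero_iff.mpr
  intro j _
  rw [← pow_succ']
  intro h
  have : (q : K) ^ (j + 1) = 1 := by linear_combination -h
  exact q_pow_ne_one (j + 1) (Nat.succ_ne_zero j) this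

lemma poch_natCast (a : K) (m : ℕ) : poch a (m : ℤ) = pochN a m := by
  unfold poch pochN
  rw [if_pos (by positivity)]
  norm_num

lemma qbinom_natCast (n : ℤ) (m : ℕ) :
    qbinom n (m : ℤ) = pochN (q ^ (n - m + 1)) m / pochN q m := by
  unfold qbinom
  rw [if_pos (by positivity), poch_natCast, poch_natCast]

lemma qbinom_zero (n : ℤ) : qbinom n 0 = 1 := by
  have := qbinom_natCast n 0
  norm_num [pochN] at this ⊢
  exact this

lemma qbinom_neg (n m : ℤ) (hm : m < 0) : qbinom n m = 0 := by
  unfold qbinom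
  rw [if_neg (by omega)]

lemma pascal (n m : ℤ) (hm : 0 ≤ m) :
    qbinom n m = qbinom (n - 1) m + q ^ (n - m) * qbinom (n - 1) (m - 1) := by
  lift m to ℕ using hm
  cases m with
  | zero =>
    simp only [Nat.cast_zero, sub_zero]
    rw [qbinom_zero, qbinom_zero, qbinom_neg _ _ (by norm_num)]
    ring
  | succ k =>
    have hm1 : ((k + 1 : ℕ) : ℤ) - 1 = (k : ℤ) := by push_cast; ring
    rw [hm1, qbinom_natCast, qbinom_natCast, qbinom_natCast]
    have e1 : n - (k + 1 : ℕ) + 1 = n - k := by push_cast; ring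
    have e2 : n - 1 - (k + 1 : ℕ) + 1 = n - k - 1 := by push_cast; ring
    have e3 : n - 1 - (k : ℕ) + 1 = n - k := by ring
    have e4 : n - ((k + 1 : ℕ) : ℤ) = n - k - 1 := by push_cast; ring
    rw [e1, e2, e3, e4]
    rw [pochN_succ (q ^ (n - (k:ℤ))) k, pochN_succ' (q ^ (n - (k:ℤ) - 1)) k, pochN_succ q k]
    have hx : (q : K) ^ (n - k) = q ^ (n - k - 1) * q := by
      rw [← zpow_add_one₀ q_ne_zero]; norm_num
    have h1 : pochN q k ≠ 0 := pochN_q_ne_zero k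
    have h2 : (1 : K) - q * q ^ k ≠ 0 := by
      rw [← pow_succ']
      intro h
      exact q_pow_ne_one (k + 1) (Nat.succ_ne_zero k) (by linear_combination -h)
    rw [hx]
    field_simp
    ring

lemma key3 (n m : ℤ) (hm : 0 ≤ m) :
    (1 - q ^ m) * qbinom n m = (1 - q ^ n) * qbinom (n - 1) (m - 1) := by
  lift m to ℕ using hm
  cases m with
  | zero =>
    rw [Nat.cast_zero, qbinom_zero, qbinom_neg _ _ (by norm_num)]
    norm_num
  | succ k =>
    have hm1 : ((k + 1 : ℕ) : ℤ) - 1 = (k : ℤ) := by push_cast; ring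
    rw [hm1, qbinom_natCast, qbinom_natCast]
    have e1 : n - (k + 1 : ℕ) + 1 = n - k := by push_cast; ring
    have e3 : n - 1 - (k : ℕ) + 1 = n - k := by ring
    rw [e1, e3]
    rw [pochN_succ, pochN_succ q k]
    have hx : (q : K) ^ (n - k) * q ^ (k : ℕ) = q ^ n := by
      rw [← zpow_natCast q (k : ℕ), ← zpow_add₀ q_ne_zero]
      norm_num
    have hy : (q : K) ^ (((k : ℕ) : ℤ) + 1) = q * q ^ (k : ℕ) := by
      rw [← pow_succ', ← zpow_natCast q (k + 1 : ℕ)]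
      push_cast
      ring_nf
    have h1 : pochN q k ≠ 0 := pochN_q_ne_zero k
    have h2 : (1 : K) - q * q ^ k ≠ 0 := by
      rw [← pow_succ']
      intro h
      exact q_pow_ne_one (k + 1) (Nat.succ_ne_zero k) (by linear_combination -h)
    have hcast : ((k + 1 : ℕ) : ℤ) = (k : ℤ) + 1 := by push_cast; ring
    rw [hcast, hy, ← hx]
    field_simp

theorem qmul2_recurrence (L i j : ℤ) (hi : 0 ≤ i) (hj : 0 ≤ j) :
    qmul2 L i j =
      qmul2 (L - 1) i j + q ^ (L - i) * qmul2 (L - 1) (i - 1) j +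
        q ^ (L - j) * qmul2 (L - 1) i (j - 1) +
        q ^ (L - i - j) * (1 - q ^ (L - 1)) * qmul2 (L - 2) (i - 1) (j - 1) := by
  unfold qmul2
  have hA : L - 1 - (i - 1) = L - i := by ring
  have hB : L - 2 - (i - 1) = L - 1 - i := by ring
  have hC : L - i - 1 = L - 1 - i := by ring
  have hD : L - 1 - 1 = L - 2 := by ring
  have e1 : qbinom L i = qbinom (L - 1) i + q ^ (L - i) * qbinom (L - 1) (i - 1) :=
    pascal L i hi
  have e2 : qbinom (L - i) j
      = qbinom (L - 1 - i) j + q ^ (L - i - j) * qbinom (L - 1 - i) (j - 1) := by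
    have := pascal (L - i) j hj
    rw [hC] at this
    exact this
  have e3 : (1 - q ^ i) * qbinom (L - 1) i
      = (1 - q ^ (L - 1)) * qbinom (L - 2) (i - 1) := by
    have := key3 (L - 1) i hi
    rw [hD] at this
    exact this
  have hq : (q : K) ^ (L - i - j) * q ^ i = q ^ (L - j) := by
    rw [← zpow_add₀ q_ne_zero]
    congr 1
    ring
  rw [hA, hB, e1, e2]
  linear_combination (q ^ (L - i - j)) * qbinom (L - 1 - i) (j - 1) * e3 +
    qbinom (L - 1) i * qbinom (L - 1 - i) (j - 1) * hq
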